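/- Let k ≥ 3. Two distinct left-infinite sequences …x_2x_1 and …y_2y_1 in X_k^{−ω} are asymptotically equivalent with respect to H_c^{(k)} if and only if there exist pairwise distinct i, j, l ∈ X_k and an integer r ≥ 0 such that x_s = y_s for all s ≤ r, {x_{r+1}, y_{r+1}} = {i, j}, and x_s = y_s = l for all s ≥ r+2. -/

import Mathlib

/-!
Common framework: automorphisms of the rooted tree `X_k^*`, root permutations,
sections, self-similar and contracting groups, Hanoi automorphisms and Hanoi
groups, following Makisumi–Stadnyk–Steinhurst, "Modified Hanoi Towers Groups
and Limit Spaces".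

A word `x_n … x_1` over the alphabet `X_k = Fin k` is encoded as the list
`[x_n, …, x_1]`, whose head `x_n` is the first letter, i.e. the letter that a
tree automorphism reads (and permutes) first.
-/

namespace Hanoi

/-- Words over the alphabet `X_k = Fin k`. -/
abbrev Word (k : ℕ) := List (Fin k)

/-- `e` is an automorphism of the rooted tree `X_k^*`: it fixes the root
(the empty word), preserves word length (levels) and preserves the tree
structure (words sharing an initial segment of length `n` are sent to words
sharing an initial segment of length `n`). -/
def IsTreeAut {k : ℕ} (e : Equiv.Perm (Word k)) : Prop :=
  (∀ w : Word k, (e w).length = w.length) ∧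
    ∀ (w v : Word k) (n : ℕ), w.take n = v.take n → (e w).take n = (e v).take n

open Classical in
/-- The root permutation `σ_e` of a tree automorphism `e` (its action on
one-letter words). -/
noncomputable def rootPerm {k : ℕ} (e : Equiv.Perm (Word k)) : Equiv.Perm (Fin k) :=
  if h : Function.Bijective (fun x : Fin k => ((e [x]).head?.getD x)) then
    Equiv.ofBijective _ h
  else 1

open Classical in
/-- The section `e|_x` of `e` at a letter `x`: the unique automorphism with
`e (x :: w) = σ_e x :: (e|_x) w` for all words `w`. -/
noncomputable def sec {k : ℕ} (e : Equiv.Perm (Word k)) (x : Fin k) : Equiv.Perm (Word k) :=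
  if h : Function.Bijective (fun w : Word k => (e (x :: w)).tail) then
    Equiv.ofBijective _ h
  else 1

/-- The section `e|_v` of `e` at a word `v = x_n … x_1`, defined by
`e|_v = (e|_{x_n})|_{x_{n-1} … x_1}`. -/
noncomputable def secW {k : ℕ} (e : Equiv.Perm (Word k)) : Word k → Equiv.Perm (Word k)
  | [] => e
  | x :: v => secW (sec e x) v

/-- A subgroup of the permutations of `X_k^*` is self-similar if it consists of
tree automorphisms and is closed under taking sections. -/
def IsSelfSimilar {k : ℕ} (G : Subgroup (Equiv.Perm (Word k))) : Prop :=
  (∀ g ∈ G, IsTreeAut g) ∧ ∀ g ∈ G, ∀ x : Fin k, sec g x ∈ G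

/-- A self-similar group `G` is contracting if there is a finite subset `N ⊆ G`
such that for every `g ∈ G` all sections of `g` at words of length at least
some `m` lie in `N`. -/
def IsContracting {k : ℕ} (G : Subgroup (Equiv.Perm (Word k))) : Prop :=
  ∃ N : Set (Equiv.Perm (Word k)), N.Finite ∧ N ⊆ (G : Set (Equiv.Perm (Word k))) ∧
    ∀ g ∈ G, ∃ m : ℕ, ∀ v : Word k, m ≤ v.length → secW g v ∈ N

/-- `N` is the nucleus of `G`: a smallest finite subset of `G` catching all
deep enough sections of every element of `G`. -/
def IsNucleus {k : ℕ} (G : Subgroup (Equiv.Perm (Word k)))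
    (N : Set (Equiv.Perm (Word k))) : Prop :=
  (N.Finite ∧ N ⊆ (G : Set (Equiv.Perm (Word k))) ∧
    ∀ g ∈ G, ∃ m : ℕ, ∀ v : Word k, m ≤ v.length → secW g v ∈ N) ∧
  ∀ N' : Set (Equiv.Perm (Word k)), N'.Finite → N' ⊆ (G : Set (Equiv.Perm (Word k))) →
    (∀ g ∈ G, ∃ m : ℕ, ∀ v : Word k, m ≤ v.length → secW g v ∈ N') → N ⊆ N'

/-- `a` is a Hanoi automorphism with set of inactive pegs `Q`: the section at
each active peg (element of the complement of `Q`) is trivial, the section at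
each inactive peg is `a` itself, and the root permutation fixes each inactive
peg. -/
def IsHanoiWith {k : ℕ} (a : Equiv.Perm (Word k)) (Q : Set (Fin k)) : Prop :=
  IsTreeAut a ∧ (∀ i ∉ Q, sec a i = 1) ∧ (∀ j ∈ Q, sec a j = a) ∧
    ∀ j ∈ Q, rootPerm a j = j

/-- `a` is a `k`-peg Hanoi automorphism. -/
def IsHanoiAut {k : ℕ} (a : Equiv.Perm (Word k)) : Prop := ∃ Q, IsHanoiWith a Q

open Classical in
/-- The set `Q_a` of inactive pegs of a Hanoi automorphism `a`; by convention
`Q_1 = X_k` (for `a ≠ 1` the set of inactive pegs is uniquely determined). -/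
noncomputable def inactivePegs {k : ℕ} (a : Equiv.Perm (Word k)) : Set (Fin k) :=
  if a = 1 then Set.univ
  else if h : ∃ Q, IsHanoiWith a Q then h.choose else ∅

/-- `S_{k,q}`: the set of Hanoi automorphisms over `X_k` with exactly `q`
inactive pegs. -/
noncomputable def hanoiSet (k q : ℕ) : Set (Equiv.Perm (Word k)) :=
  {a | IsHanoiAut a ∧ (inactivePegs a).ncard = q}

/-- `L = [s_n, …, s_1]` is a representation of `g` over the generating set `S`:
each `s_i ∈ S ∪ S⁻¹` and `g = s_n ⋯ s_2 s_1`. -/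
def IsRepOf {k : ℕ} (S : Set (Equiv.Perm (Word k))) (L : List (Equiv.Perm (Word k)))
    (g : Equiv.Perm (Word k)) : Prop :=
  (∀ s ∈ L, s ∈ S ∨ s⁻¹ ∈ S) ∧ L.prod = g

/-- The length `l(g)` of `g` with respect to `S`: the length of a minimal
representation (`0` for the identity). -/
noncomputable def repLength {k : ℕ} (S : Set (Equiv.Perm (Word k)))
    (g : Equiv.Perm (Word k)) : ℕ :=
  sInf {n | ∃ L, IsRepOf S L g ∧ L.length = n}

/-- The essential set of a representation: the intersection of the sets of
inactive pegs of its letters. -/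
noncomputable def essSet {k : ℕ} (L : List (Equiv.Perm (Word k))) : Set (Fin k) :=
  ⋂ s ∈ L, inactivePegs s

/-- The prenucleus of `G`: the set of elements `g ∈ G` with `g|_j = g` for some
letter `j`. -/
noncomputable def preNucleus {k : ℕ} (G : Subgroup (Equiv.Perm (Word k))) :
    Set (Equiv.Perm (Word k)) :=
  {g | g ∈ G ∧ ∃ j : Fin k, sec g j = g}

/-- The underlying function of the Hanoi Towers move `a_{ij}`: it changes the
first occurrence of `i` or `j` in a word by means of the transposition `(i j)`
and leaves the rest of the word unchanged. -/
def hanoiMoveFun {k : ℕ} (i j : Fin k) : Word k → Word k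
  | [] => []
  | x :: w => if x = i ∨ x = j then Equiv.swap i j x :: w else x :: hanoiMoveFun i j w

theorem hanoiMoveFun_involutive {k : ℕ} (i j : Fin k) :
    Function.Involutive (hanoiMoveFun i j) := by
  intro w
  induction w with
  | nil => rfl
  | cons x t ih =>
    by_cases h : x = i ∨ x = j
    · have h2 : Equiv.swap i j x = i ∨ Equiv.swap i j x = j := by
        rcases h with h | h <;> subst h <;> simp
      simp only [hanoiMoveFun, if_pos h, if_pos h2, Equiv.swap_apply_self]
    · simp only [hanoiMoveFun, if_neg h, ih]

/-- The Hanoi Towers move `a_{ij}`, as a permutation of `X_k^*`: its root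
permutation is the transposition `(i j)`, its sections at `i` and `j` are
trivial and all its other sections equal `a_{ij}` itself. -/
def hanoiMove {k : ℕ} (i j : Fin k) : Equiv.Perm (Word k) :=
  (hanoiMoveFun_involutive i j).toPerm

/-- The orbit of the letter `j` under the subgroup of `Sym(X_k)` generated by
the root permutations of the elements of `T`. -/
noncomputable def orbT {k : ℕ} (T : Finset (Equiv.Perm (Word k))) (j : Fin k) : Set (Fin k) :=
  MulAction.orbit (Subgroup.closure ((fun a => rootPerm a) '' (T : Set (Equiv.Perm (Word k))))) j

/-- The set `Fix(T)` of letters fixed by the root permutation of every element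
of `T`. -/
noncomputable def fixT {k : ℕ} (T : Finset (Equiv.Perm (Word k))) : Set (Fin k) :=
  {x | ∀ s ∈ T, rootPerm s x = x}

/-- Condition (*) on a generating set `S` of Hanoi automorphisms: for every
finite `T ⊆ S` with nonempty essential set and every letter `j ∉ Fix(T)`,
the orbit of `j` misses the inactive pegs of some element of `T`. -/
noncomputable def CondStar {k : ℕ} (S : Set (Equiv.Perm (Word k))) : Prop :=
  ∀ T : Finset (Equiv.Perm (Word k)), (T : Set (Equiv.Perm (Word k))) ⊆ S →
    (⋂ s ∈ T, inactivePegs s).Nonempty →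
    ∀ j : Fin k, j ∉ fixT T →
      ∃ s ∈ T, orbT T j ∩ inactivePegs s = ∅

open Classical in
/-- `d(g)`: the least number of distinct generators occurring among all
representations of `g` having nonempty essential set. -/
noncomputable def dCount {k : ℕ} (S : Set (Equiv.Perm (Word k)))
    (g : Equiv.Perm (Word k)) : ℕ :=
  sInf {M | ∃ L, IsRepOf S L g ∧ (essSet L).Nonempty ∧ L.toFinset.card = M}

/-- `S` is fully symmetric: for every non-identity `a ∈ S` and every
`φ ∈ Sym(X_k)`, the Hanoi automorphism `φ·a` with inactive pegs `φ(Q_a)` and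
root permutation `φ ∘ σ_a ∘ φ⁻¹` again lies in `S`. -/
noncomputable def FullySymmetric {k : ℕ} (S : Set (Equiv.Perm (Word k))) : Prop :=
  ∀ a ∈ S, a ≠ 1 → ∀ φ : Equiv.Perm (Fin k), ∀ b : Equiv.Perm (Word k),
    IsHanoiWith b (φ '' inactivePegs a) →
    rootPerm b = φ * rootPerm a * φ⁻¹ → b ∈ S

/-- The family `R̲_{k,n}`: the identity together with all Hanoi automorphisms
`a` such that (1) `Q_a ⊆ {m+1, …, m+n}` for some `m`, and (2) whenever
`i ∈ Q_a` the root permutation of `a` fixes `i-1, …, i-(n-1)`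
(all peg labels mod `k`). -/
noncomputable def Runder (k n : ℕ) : Set (Equiv.Perm (Word k)) :=
  {a | a = 1 ∨ (IsHanoiAut a ∧
    (∃ m : Fin k, ∀ q ∈ inactivePegs a, ∃ t : ℕ, 1 ≤ t ∧ t ≤ n ∧
      (q : ℕ) = ((m : ℕ) + t) % k) ∧
    ∀ i ∈ inactivePegs a, ∀ x : Fin k, ∀ t : ℕ, 1 ≤ t → t ≤ n - 1 →
      ((x : ℕ) + t) % k = (i : ℕ) → rootPerm a x = x)}

/-- The family `R̄_{k,n}`: the identity together with all Hanoi automorphisms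
`a` such that (1) `Q_a ⊆ {m+1, …, m+n}` for some `m`, and (2) whenever
`i ∈ Q_a` the root permutation of `a` fixes `i+1, …, i+(n-1)`
(all peg labels mod `k`). -/
noncomputable def Rover (k n : ℕ) : Set (Equiv.Perm (Word k)) :=
  {a | a = 1 ∨ (IsHanoiAut a ∧
    (∃ m : Fin k, ∀ q ∈ inactivePegs a, ∃ t : ℕ, 1 ≤ t ∧ t ≤ n ∧
      (q : ℕ) = ((m : ℕ) + t) % k) ∧
    ∀ i ∈ inactivePegs a, ∀ x : Fin k, ∀ t : ℕ, 1 ≤ t → t ≤ n - 1 →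
      (x : ℕ) = ((i : ℕ) + t) % k → rootPerm a x = x)}

/-- The finite word `x_m … x_1` (first letter `x_m`) read off from a
left-infinite sequence `… x_2 x_1`, encoded as `x : ℕ → Fin k` with
`x s = x_{s+1}`. -/
def wordOf {k : ℕ} (x : ℕ → Fin k) (m : ℕ) : Word k := (List.range m).reverse.map x

section Aux

variable {k : ℕ}

/-! ### The concrete generator function -/

/-- The underlying function of a one-inactive-peg Hanoi automorphism with inactive
peg `l` and root permutation `σ`. -/
def genFun (l : Fin k) (σ : Equiv.Perm (Fin k)) : Word k → Word k
  | [] => []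
  | x :: w => if x = l then x :: genFun l σ w else σ x :: w

lemma genFun_cons (l : Fin k) (σ : Equiv.Perm (Fin k)) (x : Fin k) (w : Word k) :
    genFun l σ (x :: w) = if x = l then x :: genFun l σ w else σ x :: w := rfl

lemma genFun_length (l : Fin k) (σ : Equiv.Perm (Fin k)) :
    ∀ w : Word k, (genFun l σ w).length = w.length
  | [] => rfl
  | x :: w => by
    by_cases h : x = l <;> simp [genFun_cons, h, genFun_length l σ w]

lemma genFun_take (l : Fin k) (σ : Equiv.Perm (Fin k)) :
    ∀ (w v : Word k) (n : ℕ), w.take n = v.take n →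
      (genFun l σ w).take n = (genFun l σ v).take n := by
  intro w
  induction w with
  | nil =>
    intro v n h
    cases v with
    | nil => rfl
    | cons y v' =>
      cases n with
      | zero => simp
      | succ n => simp at h
  | cons x w ih =>
    intro v n h
    cases n with
    | zero => simp
    | succ n =>
      cases v with
      | nil => simp at h
      | cons y v' =>
        rw [List.take_succ_cons, List.take_succ_cons] at h
        obtain ⟨rfl, h2⟩ := List.cons_eq_cons.mp h
        by_cases hx : x = l
        · simp only [genFun_cons, if_pos hx, List.take_succ_cons]
          rw [ih v' n h2]
        · simp only [genFun_cons, if_neg hx, List.take_succ_cons]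
          rw [h2]

lemma genFun_one (l : Fin k) : ∀ w : Word k, genFun l 1 w = w
  | [] => rfl
  | x :: w => by
    by_cases h : x = l <;> simp [genFun_cons, h, genFun_one l w]

lemma genFun_comp (l : Fin k) (σ τ : Equiv.Perm (Fin k)) (hτ : τ l = l) :
    ∀ w : Word k, genFun l σ (genFun l τ w) = genFun l (σ * τ) w
  | [] => rfl
  | x :: w => by
    by_cases hx : x = l
    · rw [genFun_cons, if_pos hx, genFun_cons, if_pos hx, genFun_cons, if_pos hx,
        genFun_comp l σ τ hτ w]
    · have hτx : τ x ≠ l := fun h => hx (τ.injective (h.trans hτ.symm))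
      simp [genFun_cons, hx, hτx, Equiv.Perm.mul_apply]

/-! ### Tree automorphism calculus -/

lemma ta_nil {e : Equiv.Perm (Word k)} (he : IsTreeAut e) : e [] = [] :=
  List.length_eq_zero_iff.mp (he.1 [])

/-- The root letter function of `e`. -/
def cFun (e : Equiv.Perm (Word k)) (x : Fin k) : Fin k := (e [x]).head?.getD x

lemma ta_single {e : Equiv.Perm (Word k)} (he : IsTreeAut e) (x : Fin k) :
    e [x] = [cFun e x] := by
  have h1 : (e [x]).length = 1 := he.1 [x]
  obtain ⟨a, ha⟩ := List.length_eq_one_iff.mp h1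
  rw [cFun, ha]
  rfl

lemma cFun_bijective {e : Equiv.Perm (Word k)} (he : IsTreeAut e) :
    Function.Bijective (cFun e) := by
  have hinj : Function.Injective (cFun e) := by
    intro a b hab
    have h : e [a] = e [b] := by rw [ta_single he, ta_single he, hab]
    simpa using e.injective h
  exact Finite.injective_iff_bijective.mp hinj

lemma rootPerm_apply {e : Equiv.Perm (Word k)} (he : IsTreeAut e) (x : Fin k) :
    rootPerm e x = cFun e x := by
  have hb : Function.Bijective fun x : Fin k => ((e [x]).head?.getD x) := cFun_bijective he
  rw [rootPerm, dif_pos hb]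
  rfl

lemma ta_cons {e : Equiv.Perm (Word k)} (he : IsTreeAut e) (x : Fin k) (w : Word k) :
    e (x :: w) = cFun e x :: (e (x :: w)).tail := by
  have hlen : (e (x :: w)).length = w.length + 1 := he.1 _
  obtain ⟨a, t, hat⟩ : ∃ a t, e (x :: w) = a :: t := by
    cases hE : e (x :: w) with
    | nil => rw [hE] at hlen; simp at hlen
    | cons a t => exact ⟨a, t, rfl⟩
  have htake : (e (x :: w)).take 1 = (e [x]).take 1 := by
    apply he.2
    simp
  rw [hat, ta_single he] at htake
  simp at htake
  rw [hat, htake]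
  rfl

lemma ta_tail_bijective {e : Equiv.Perm (Word k)} (he : IsTreeAut e) (x : Fin k) :
    Function.Bijective (fun w : Word k => (e (x :: w)).tail) := by
  constructor
  · intro w w' hww
    have h : e (x :: w) = e (x :: w') := by
      rw [ta_cons he x w, ta_cons he x w']
      simpa using hww
    simpa using e.injective h
  · intro u
    have hez : e (e.symm (cFun e x :: u)) = cFun e x :: u := e.apply_symm_apply _
    have hzlen : (e.symm (cFun e x :: u)).length = u.length + 1 := by
      have h := he.1 (e.symm (cFun e x :: u))
      rw [hez] at h
      simpa using h.symm
    obtain ⟨a, t, hat⟩ : ∃ a t, e.symm (cFun e x :: u) = a :: t := by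
      cases hE : e.symm (cFun e x :: u) with
      | nil => rw [hE] at hzlen; simp at hzlen
      | cons a t => exact ⟨a, t, rfl⟩
    rw [hat] at hez
    have hc := ta_cons he a t
    rw [hez] at hc
    have ha := List.cons_eq_cons.mp hc
    have hax : a = x := (cFun_bijective he).1 ha.1.symm
    refine ⟨t, ?_⟩
    show (e (x :: t)).tail = u
    rw [← hax, hez]
    rfl

lemma sec_apply {e : Equiv.Perm (Word k)} (he : IsTreeAut e) (x : Fin k) (w : Word k) :
    sec e x w = (e (x :: w)).tail := by
  have hb : Function.Bijective fun w : Word k => (e (x :: w)).tail := ta_tail_bijective he x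
  rw [sec, dif_pos hb]
  rfl

lemma ta_cons' {e : Equiv.Perm (Word k)} (he : IsTreeAut e) (x : Fin k) (w : Word k) :
    e (x :: w) = rootPerm e x :: sec e x w := by
  rw [rootPerm_apply he, sec_apply he]
  exact ta_cons he x w

lemma isTreeAut_of_genFun (e : Equiv.Perm (Word k)) (l : Fin k) (σ : Equiv.Perm (Fin k))
    (h : ∀ w, e w = genFun l σ w) : IsTreeAut e :=
  ⟨fun w => by rw [h]; exact genFun_length l σ w,
   fun w v n hw => by rw [h, h]; exact genFun_take l σ w v n hw⟩

/-! ### Hanoi automorphisms with one inactive peg are `genFun`s -/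

lemma IsHanoiWith.eq_genFun {a : Equiv.Perm (Word k)} {l : Fin k}
    (ha : IsHanoiWith a {l}) : ∀ w, a w = genFun l (rootPerm a) w := by
  intro w
  induction w with
  | nil => exact ta_nil ha.1
  | cons x w ih =>
    rw [ta_cons' ha.1, genFun_cons]
    by_cases hx : x = l
    · subst hx
      rw [if_pos rfl]
      have h1 : sec a x = a := ha.2.2.1 x rfl
      have h2 : rootPerm a x = x := ha.2.2.2 x rfl
      rw [h1, h2, ih]
    · rw [if_neg hx]
      have h1 : sec a x = 1 := ha.2.1 x (by simpa using hx)
      rw [h1]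
      rfl

lemma pegs_unique {a : Equiv.Perm (Word k)} {Q Q' : Set (Fin k)}
    (h : IsHanoiWith a Q) (h' : IsHanoiWith a Q') (ha : a ≠ 1) : Q = Q' := by
  ext j
  constructor
  · intro hj
    by_contra hj'
    exact ha ((h.2.2.1 j hj).symm.trans (h'.2.1 j hj'))
  · intro hj
    by_contra hj'
    exact ha ((h'.2.2.1 j hj).symm.trans (h.2.1 j hj'))

lemma exists_gen_of_mem {a : Equiv.Perm (Word k)} (hk : 3 ≤ k)
    (ha : a ∈ hanoiSet k 1) :
    ∃ (l : Fin k) (σ : Equiv.Perm (Fin k)), σ l = l ∧ ∀ w, a w = genFun l σ w := by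
  obtain ⟨⟨Q₀, hQ₀⟩, hcard⟩ := ha
  have ha1 : a ≠ 1 := by
    intro h
    rw [h, inactivePegs, if_pos rfl, Set.ncard_univ, Nat.card_eq_fintype_card,
      Fintype.card_fin] at hcard
    omega
  have hex : ∃ Q, IsHanoiWith a Q := ⟨Q₀, hQ₀⟩
  have h2 : IsHanoiWith a (inactivePegs a) := by
    rw [inactivePegs, if_neg ha1, dif_pos hex]
    exact hex.choose_spec
  obtain ⟨l, hl⟩ := Set.ncard_eq_one.mp hcard
  rw [hl] at h2
  exact ⟨l, rootPerm a, h2.2.2.2 l rfl, h2.eq_genFun⟩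

/-! ### Products of generators and their sections, concretely -/

/-- Data for a list of generators: pairs (inactive peg, root permutation). -/
abbrev GList (k : ℕ) := List (Fin k × Equiv.Perm (Fin k))

/-- Validity: each root permutation fixes the corresponding inactive peg. -/
def validL (L : GList k) : Prop := ∀ p ∈ L, p.2 p.1 = p.1

/-- The product of the generators encoded by `L`, as a function on words. -/
def prodFun (L : GList k) (w : Word k) : Word k :=
  L.foldr (fun p u => genFun p.1 p.2 u) w

lemma prodFun_nil (w : Word k) : prodFun ([] : GList k) w = w := rfl

lemma prodFun_cons (p : Fin k × Equiv.Perm (Fin k)) (L : GList k) (w : Word k) :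
    prodFun (p :: L) w = genFun p.1 p.2 (prodFun L w) := rfl

lemma prodFun_append (L₁ L₂ : GList k) (w : Word k) :
    prodFun (L₁ ++ L₂) w = prodFun L₁ (prodFun L₂ w) := List.foldr_append ..

/-- The action of the product on first letters. -/
def phiL : GList k → Fin k → Fin k
  | [], x => x
  | p :: L, x => p.2 (phiL L x)

/-- The section of the product at a first letter, as a list of generators. -/
def secL : GList k → Fin k → GList k
  | [], _ => []
  | p :: L, x => if phiL L x = p.1 then p :: secL L x else secL L x

/-- The section of the product along a word. -/
def secLW : GList k → Word k → GList k
  | L, [] => L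
  | L, a :: v => secLW (secL L a) v

lemma secLW_nil (L : GList k) : secLW L [] = L := rfl

lemma secLW_cons (L : GList k) (a : Fin k) (v : Word k) :
    secLW L (a :: v) = secLW (secL L a) v := rfl

lemma secL_sublist : ∀ (L : GList k) (x : Fin k), List.Sublist (secL L x) L
  | [], _ => List.Sublist.refl _
  | p :: L, x => by
    rw [secL]
    by_cases h : phiL L x = p.1
    · rw [if_pos h]
      exact (secL_sublist L x).cons₂ p
    · rw [if_neg h]
      exact (secL_sublist L x).cons p

lemma secLW_sublist : ∀ (v : Word k) (L : GList k), List.Sublist (secLW L v) L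
  | [], L => List.Sublist.refl _
  | a :: v, L => (secLW_sublist v (secL L a)).trans (secL_sublist L a)

lemma validL_of_sublist {L L' : GList k} (h : List.Sublist L' L) (hv : validL L) : validL L' :=
  fun p hp => hv p (h.subset hp)

lemma prodFun_letter : ∀ (L : GList k), validL L → ∀ (x : Fin k) (w : Word k),
    prodFun L (x :: w) = phiL L x :: prodFun (secL L x) w
  | [], _, x, w => rfl
  | p :: L, hv, x, w => by
    have hvL : validL L := fun q hq => hv q (List.mem_cons_of_mem _ hq)
    rw [prodFun_cons, prodFun_letter L hvL x w, genFun_cons, phiL, secL]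
    by_cases h : phiL L x = p.1
    · rw [if_pos h, if_pos h, prodFun_cons]
      have hh : p.2 (phiL L x) = phiL L x := by
        rw [h]
        exact hv p List.mem_cons_self
      rw [hh]
    · rw [if_neg h, if_neg h]

lemma allKept : ∀ (L : GList k), validL L → ∀ x : Fin k, (secL L x).length = L.length →
    (∀ p ∈ L, p.1 = x) ∧ phiL L x = x
  | [], _, x, _ => ⟨by simp, rfl⟩
  | p :: L, hv, x, hlen => by
    have hvL : validL L := fun q hq => hv q (List.mem_cons_of_mem _ hq)
    rw [secL] at hlen
    by_cases h : phiL L x = p.1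
    · rw [if_pos h] at hlen
      simp only [List.length_cons, Nat.add_right_cancel_iff] at hlen
      obtain ⟨h1, h2⟩ := allKept L hvL x hlen
      have hpx : p.1 = x := by rw [← h, h2]
      refine ⟨?_, ?_⟩
      · intro q hq
        rcases List.mem_cons.mp hq with rfl | hq
        · exact hpx
        · exact h1 q hq
      · show p.2 (phiL L x) = x
        rw [h2, ← hpx]
        exact hv p List.mem_cons_self
    · exfalso
      rw [if_neg h] at hlen
      have := (secL_sublist L x).length_le
      simp only [List.length_cons] at hlen
      omega

lemma listperm_fix (l : Fin k) : ∀ S : List (Equiv.Perm (Fin k)),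
    (∀ σ ∈ S, σ l = l) → S.prod l = l
  | [], _ => rfl
  | σ :: S, h => by
    rw [List.prod_cons, Equiv.Perm.mul_apply,
      listperm_fix l S (fun τ hτ => h τ (List.mem_cons_of_mem _ hτ)),
      h σ List.mem_cons_self]

lemma prodFun_eq_genFun (l : Fin k) : ∀ (L : GList k), validL L → (∀ p ∈ L, p.1 = l) →
    ∀ w : Word k, prodFun L w = genFun l (L.map Prod.snd).prod w
  | [], _, _, w => by rw [prodFun_nil, List.map_nil, List.prod_nil, genFun_one]
  | p :: L, hv, hp, w => by
    have hvL : validL L := fun q hq => hv q (List.mem_cons_of_mem _ hq)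
    have hpL : ∀ q ∈ L, q.1 = l := fun q hq => hp q (List.mem_cons_of_mem _ hq)
    have hfix : (L.map Prod.snd).prod l = l := by
      apply listperm_fix
      intro σ hσ
      obtain ⟨q, hq, rfl⟩ := List.mem_map.mp hσ
      rw [← hpL q hq]
      exact hv q (List.mem_cons_of_mem _ hq)
    have hp1 : p.1 = l := hp p List.mem_cons_self
    rw [prodFun_cons, prodFun_eq_genFun l L hvL hpL w, hp1,
      genFun_comp l p.2 _ hfix w, List.map_cons, List.prod_cons]

lemma prodFun_drop : ∀ (v : Word k) (L : GList k), validL L → ∀ w : Word k,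
    (prodFun L (v ++ w)).drop v.length = prodFun (secLW L v) w
  | [], L, _, w => by rw [List.nil_append, List.length_nil, List.drop_zero, secLW_nil]
  | a :: v, L, hv, w => by
    rw [List.cons_append, prodFun_letter L hv a (v ++ w), List.length_cons,
      List.drop_succ_cons, secLW_cons]
    exact prodFun_drop v (secL L a) (validL_of_sublist (secL_sublist L a) hv) w

lemma secLW_append_singleton : ∀ (v : Word k) (L : GList k) (a : Fin k),
    secLW L (v ++ [a]) = secL (secLW L v) a
  | [], L, a => rfl
  | b :: v, L, a => by
    rw [List.cons_append, secLW_cons, secLW_cons]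
    exact secLW_append_singleton v (secL L b) a

/-! ### Words and segments -/

lemma wordOf_zero (x : ℕ → Fin k) : wordOf x 0 = [] := rfl

lemma wordOf_succ (x : ℕ → Fin k) (m : ℕ) : wordOf x (m + 1) = x m :: wordOf x m := by
  rw [wordOf, wordOf, List.range_succ, List.reverse_append]
  rfl

lemma wordOf_eq_iff (x y : ℕ → Fin k) :
    ∀ m, wordOf x m = wordOf y m ↔ ∀ s < m, x s = y s
  | 0 => by simp [wordOf_zero]
  | m + 1 => by
    rw [wordOf_succ, wordOf_succ, List.cons_eq_cons, wordOf_eq_iff x y m]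
    constructor
    · rintro ⟨h1, h2⟩ s hs
      rcases Nat.lt_succ_iff_lt_or_eq.mp hs with hs | rfl
      · exact h2 s hs
      · exact h1
    · intro h
      exact ⟨h m (Nat.lt_succ_self m), fun s hs => h s (hs.trans (Nat.lt_succ_self m))⟩

/-- The word `x_{s+t} … x_{s+1}` (as functions: indices `s+t-1` down to `s`). -/
def seg (x : ℕ → Fin k) (s t : ℕ) : Word k := ((List.range' s t).reverse).map x

lemma seg_length (x : ℕ → Fin k) (s t : ℕ) : (seg x s t).length = t := by
  simp [seg]

lemma wordOf_eq_seg_append (x : ℕ → Fin k) {s m : ℕ} (h : s ≤ m) :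
    wordOf x m = seg x s (m - s) ++ wordOf x s := by
  have hr : List.range' 0 s ++ List.range' s (m - s) = List.range' 0 m := by
    have := List.range'_append (s := 0) (m := s) (n := m - s) (step := 1)
    simpa [Nat.sub_add_cancel h, Nat.add_sub_cancel' h] using this
  rw [wordOf, wordOf, seg, List.range_eq_range', List.range_eq_range', ← hr,
    List.reverse_append, List.map_append]

lemma seg_succ (x : ℕ → Fin k) (s t : ℕ) :
    seg x s (t + 1) = seg x (s + 1) t ++ [x s] := by
  rw [seg, seg, List.range'_succ, List.reverse_cons, List.map_append]
  rfl

/-! ### Representation of elements of the closure -/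

/-- The inverse list. -/
def invList (L : GList k) : GList k := (L.map (fun p => (p.1, p.2⁻¹))).reverse

lemma invList_cons (p : Fin k × Equiv.Perm (Fin k)) (L : GList k) :
    invList (p :: L) = invList L ++ [(p.1, p.2⁻¹)] := by
  rw [invList, invList, List.map_cons, List.reverse_cons]

lemma validL_invList {L : GList k} (hv : validL L) : validL (invList L) := by
  intro p hp
  rw [invList, List.mem_reverse] at hp
  obtain ⟨q, hq, rfl⟩ := List.mem_map.mp hp
  show q.2⁻¹ q.1 = q.1
  have := hv q hq
  exact Equiv.Perm.inv_eq_iff_eq.mpr this.symm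

lemma prodFun_cancel : ∀ L : GList k, validL L → ∀ w : Word k,
    prodFun L (prodFun (invList L) w) = w
  | [], _, w => rfl
  | p :: L, hv, w => by
    have hvL : validL L := fun q hq => hv q (List.mem_cons_of_mem _ hq)
    have hpl : p.2 p.1 = p.1 := hv p List.mem_cons_self
    have hpl' : p.2⁻¹ p.1 = p.1 := Equiv.Perm.inv_eq_iff_eq.mpr hpl.symm
    rw [invList_cons, prodFun_append, prodFun_cons, prodFun_cons, prodFun_nil,
      prodFun_cancel L hvL (genFun p.1 p.2⁻¹ w), genFun_comp p.1 p.2 p.2⁻¹ hpl' w,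
      mul_inv_cancel, genFun_one]

lemma closure_rep (hk : 3 ≤ k) {f : Equiv.Perm (Word k)}
    (hf : f ∈ Subgroup.closure (hanoiSet k 1 ∪ {1})) :
    ∃ L : GList k, validL L ∧ ∀ w, f w = prodFun L w := by
  induction hf using Subgroup.closure_induction with
  | mem a ha =>
    rcases ha with ha | ha
    · obtain ⟨l, σ, hσ, hw⟩ := exists_gen_of_mem hk ha
      refine ⟨[(l, σ)], ?_, fun w => by rw [hw w]; rfl⟩
      intro p hp
      simp only [List.mem_singleton] at hp
      subst hp
      exact hσ
    · refine ⟨[], fun p hp => absurd hp List.not_mem_nil, fun w => ?_⟩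
      rw [Set.mem_singleton_iff.mp ha]
      rfl
  | one => exact ⟨[], fun p hp => absurd hp List.not_mem_nil, fun w => rfl⟩
  | mul f g _ _ ihf ihg =>
    obtain ⟨Lf, hLfv, hLf⟩ := ihf
    obtain ⟨Lg, hLgv, hLg⟩ := ihg
    refine ⟨Lf ++ Lg, ?_, fun w => ?_⟩
    · intro p hp
      rcases List.mem_append.mp hp with hp | hp
      · exact hLfv p hp
      · exact hLgv p hp
    · rw [Equiv.Perm.mul_apply, hLg, hLf, prodFun_append]
  | inv f _ ih =>
    obtain ⟨L, hLv, hL⟩ := ih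
    refine ⟨invList L, validL_invList hLv, fun w => ?_⟩
    have h1 : f (prodFun (invList L) w) = w := by
      rw [hL, prodFun_cancel L hLv]
    calc f⁻¹ w = f⁻¹ (f (prodFun (invList L) w)) := by rw [h1]
    _ = prodFun (invList L) w := by simp

/-! ### Action of a single generator on tails of sequences -/

lemma genFun_wordOf_cases (l : Fin k) (σ : Equiv.Perm (Fin k)) (x y : ℕ → Fin k) :
    ∀ m, genFun l σ (wordOf x m) = wordOf y m →
      (∀ s < m, x s = y s) ∨
      ∃ q < m, x q ≠ l ∧ y q = σ (x q) ∧ (∀ s, q < s → s < m → x s = l ∧ y s = l) ∧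
        ∀ s < q, x s = y s := by
  intro m
  induction m with
  | zero => intro _; left; intro s hs; omega
  | succ m ih =>
    intro hm
    rw [wordOf_succ, wordOf_succ, genFun_cons] at hm
    by_cases hxm : x m = l
    · rw [if_pos hxm] at hm
      obtain ⟨hym, htail⟩ := List.cons_eq_cons.mp hm
      rcases ih htail with h | ⟨q, hq, h1, h2, h3, h4⟩
      · left
        intro s hs
        rcases Nat.lt_succ_iff_lt_or_eq.mp hs with hs | rfl
        · exact h s hs
        · exact hym
      · right
        refine ⟨q, hq.trans (Nat.lt_succ_self m), h1, h2, ?_, h4⟩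
        intro s hqs hsm
        rcases Nat.lt_succ_iff_lt_or_eq.mp hsm with hsm | rfl
        · exact h3 s hqs hsm
        · exact ⟨hxm, hym ▸ hxm⟩
    · rw [if_neg hxm] at hm
      obtain ⟨hym, htail⟩ := List.cons_eq_cons.mp hm
      right
      refine ⟨m, Nat.lt_succ_self m, hxm, hym.symm, ?_, ?_⟩
      · intro s hqs hsm; omega
      · intro s hs
        exact (wordOf_eq_iff x y m).mp htail s hs

/-! ### Stabilization and ultrafilter limits -/

lemma mono_stab (f : ℕ → ℕ) (hm : Monotone f) (B : ℕ) (hB : ∀ s, f s ≤ B) :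
    ∃ S, ∀ s, S ≤ s → f s = f S := by
  have hne : (Set.range f).Nonempty := ⟨f 0, 0, rfl⟩
  have hbdd : BddAbove (Set.range f) := ⟨B, by rintro - ⟨s, rfl⟩; exact hB s⟩
  obtain ⟨S, hS⟩ := Nat.sSup_mem hne hbdd
  refine ⟨S, fun s hs => le_antisymm ?_ (hm hs)⟩
  rw [hS]
  exact le_csSup hbdd ⟨s, rfl⟩

lemma ultra_const {α : Type*} (U : Ultrafilter ℕ) (f : ℕ → α)
    (hf : (Set.range f).Finite) : ∃ a, {t | f t = a} ∈ U := by
  have hu : (⋃ a ∈ Set.range f, f ⁻¹' {a}) ∈ U := by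
    have he : (⋃ a ∈ Set.range f, f ⁻¹' {a}) = Set.univ := by
      ext t
      simp only [Set.mem_iUnion, Set.mem_preimage, Set.mem_singleton_iff, Set.mem_univ,
        iff_true]
      exact ⟨f t, ⟨t, rfl⟩, rfl⟩
    rw [he]
    exact Filter.univ_mem
  obtain ⟨a, _, ha⟩ := (Ultrafilter.finite_biUnion_mem_iff hf).mp hu
  exact ⟨a, ha⟩

/-! ### The explicit generators are Hanoi automorphisms with one inactive peg -/

lemma swapGen_mem (hk : 3 ≤ k) {i j l : Fin k} (hij : i ≠ j) (hil : i ≠ l) (hjl : j ≠ l) :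
    ∃ a : Equiv.Perm (Word k),
      (∀ w, a w = genFun l (Equiv.swap i j) w) ∧ a ∈ hanoiSet k 1 := by
  set σ := Equiv.swap i j with hσ
  have hσl : σ l = l := Equiv.swap_apply_of_ne_of_ne hil.symm hjl.symm
  have hinv : Function.Involutive (genFun l σ) := by
    intro w
    rw [genFun_comp l σ σ hσl w, Equiv.swap_mul_self, genFun_one]
  set a := hinv.toPerm with ha
  have hcoe : ∀ w, a w = genFun l σ w := fun w => rfl
  have hta : IsTreeAut a := isTreeAut_of_genFun a l σ hcoe
  have hW : IsHanoiWith a {l} := by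
    refine ⟨hta, ?_, ?_, ?_⟩
    · intro m hm
      have hm' : m ≠ l := by simpa using hm
      apply Equiv.ext
      intro w
      rw [sec_apply hta, hcoe, genFun_cons, if_neg hm', List.tail_cons]
      rfl
    · intro m hm
      have hm' : m = l := hm
      subst hm'
      apply Equiv.ext
      intro w
      rw [sec_apply hta, hcoe, genFun_cons, if_pos rfl, List.tail_cons]
      exact (hcoe w).symm
    · intro m hm
      have hm' : m = l := hm
      subst hm'
      have h1 : a [m] = [m] := by
        rw [hcoe, genFun_cons, if_pos rfl]
        rfl
      rw [rootPerm_apply hta, cFun, h1]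
      rfl
  have ha1 : a ≠ 1 := by
    intro h
    have h2 : a [i] = [j] := by
      rw [hcoe, genFun_cons, if_neg hil, hσ, Equiv.swap_apply_left]
    rw [h] at h2
    simp only [Equiv.Perm.coe_one, id_eq, List.cons.injEq] at h2
    exact hij h2.1
  have hpegs : inactivePegs a = {l} := by
    have hex : ∃ Q, IsHanoiWith a Q := ⟨{l}, hW⟩
    rw [inactivePegs, if_neg ha1, dif_pos hex]
    exact pegs_unique hex.choose_spec hW ha1
  refine ⟨a, hcoe, ⟨{l}, hW⟩, ?_⟩
  rw [hpegs]
  exact Set.ncard_singleton l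

end Aux

/-- asymptotic equivalence for `H_c^{(k)}`.
Two distinct left-infinite sequences `… x_2 x_1` and `… y_2 y_1` (encoded as
`x y : ℕ → Fin k` with `x s = x_{s+1}`) are asymptotically equivalent with
respect to `H_c^{(k)}` if and only if there are pairwise distinct letters
`i, j, l` and `r ≥ 0` with `x_s = y_s` for `s ≤ r`,
`{x_{r+1}, y_{r+1}} = {i, j}` and `x_s = y_s = l` for `s ≥ r + 2`. -/
theorem asymptotic_equivalence_Hc {k : ℕ} (hk : 3 ≤ k)
    (x y : ℕ → Fin k) (hxy : x ≠ y) :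
    (∃ g : ℕ → Equiv.Perm (Word k),
      (∀ m, g m ∈ Subgroup.closure (hanoiSet k 1 ∪ {1})) ∧
      (Set.range g).Finite ∧
      ∀ m, 1 ≤ m → g m (wordOf x m) = wordOf y m) ↔
    (∃ i j l : Fin k, i ≠ j ∧ i ≠ l ∧ j ≠ l ∧ ∃ r : ℕ,
      (∀ s, s < r → x s = y s) ∧ ({x r, y r} : Set (Fin k)) = {i, j} ∧
      ∀ s, r + 1 ≤ s → x s = l ∧ y s = l) := by
  constructor
  · rintro ⟨g, hgmem, hgfin, hgact⟩
    obtain ⟨d, hd⟩ : ∃ d, x d ≠ y d := by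
      by_contra hcon
      push_neg at hcon
      exact hxy (funext hcon)
    obtain ⟨h0, hM⟩ : ∃ h0, {m | g m = h0 ∧ 1 ≤ m}.Infinite := by
      by_contra hcon
      push_neg at hcon
      have hsub : (Set.Ici 1 : Set ℕ) ⊆ ⋃ h ∈ Set.range g, {m | g m = h ∧ 1 ≤ m} := by
        intro m hm
        exact Set.mem_biUnion ⟨m, rfl⟩ ⟨rfl, hm⟩
      have hfin : (Set.Ici 1 : Set ℕ).Finite :=
        Set.Finite.subset (Set.Finite.biUnion hgfin fun h _ => hcon h) hsub
      exact Set.Ici_infinite 1 hfin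
    have hmem0 : h0 ∈ Subgroup.closure (hanoiSet k 1 ∪ {1}) := by
      obtain ⟨m0, hm0⟩ := hM.nonempty
      rw [← hm0.1]
      exact hgmem m0
    obtain ⟨L₀, hL₀v, hL₀⟩ := closure_rep hk hmem0
    set U := Filter.hyperfilter ℕ with hU
    set emb := hM.natEmbedding with hemb
    set mf : ℕ → ℕ := fun t => (emb t : ℕ) with hmf
    have hmf_inj : Function.Injective mf := fun a b hab => emb.injective (Subtype.ext hab)
    have hmfM : ∀ t, g (mf t) = h0 ∧ 1 ≤ mf t := fun t => (emb t).2
    have hUtail : ∀ s : ℕ, {t | s ≤ mf t} ∈ U := by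
      intro s
      have hfin : {t | s ≤ mf t}ᶜ.Finite := by
        have hsub : {t | s ≤ mf t}ᶜ ⊆ mf ⁻¹' Set.Iio s := by
          intro t ht
          simp only [Set.mem_compl_iff, Set.mem_setOf_eq, not_le] at ht
          exact ht
        exact Set.Finite.subset
          (Set.Finite.preimage (Set.injOn_of_injective hmf_inj) (Set.finite_Iio s)) hsub
      rw [← compl_compl {t | s ≤ mf t}]
      exact Filter.compl_mem_hyperfilter_of_finite hfin
    have hact : ∀ t, ∀ s ≤ mf t,
        prodFun (secLW L₀ (seg x s (mf t - s))) (wordOf x s) = wordOf y s := by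
      intro t s hs
      have h1 : prodFun L₀ (wordOf x (mf t)) = wordOf y (mf t) := by
        rw [← hL₀, ← (hmfM t).1]
        exact hgact (mf t) (hmfM t).2
      have hx' : wordOf x (mf t) = seg x s (mf t - s) ++ wordOf x s := wordOf_eq_seg_append x hs
      have hy' : wordOf y (mf t) = seg y s (mf t - s) ++ wordOf y s := wordOf_eq_seg_append y hs
      have h2 := congrArg (List.drop (seg x s (mf t - s)).length) h1
      rw [hx', prodFun_drop _ L₀ hL₀v, hy'] at h2
      have h3 : (seg y s (mf t - s) ++ wordOf y s).drop (seg x s (mf t - s)).length =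
          wordOf y s := List.drop_left' (by rw [seg_length, seg_length])
      exact h2.trans h3
    have hJex : ∀ s : ℕ, ∃ Ls : GList k, {t | secLW L₀ (seg x s (mf t - s)) = Ls} ∈ U := by
      intro s
      apply ultra_const
      apply Set.Finite.subset (List.finite_toSet L₀.sublists)
      rintro - ⟨t, rfl⟩
      exact List.mem_sublists.mpr (secLW_sublist _ _)
    choose J hJ using hJex
    have hpick3 : ∀ A B C : Set ℕ, A ∈ U → B ∈ U → C ∈ U →
        ∃ t, t ∈ A ∧ t ∈ B ∧ t ∈ C := by
      intro A B C hA hB hC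
      have h1 : A ∩ B ∩ C ∈ U := Filter.inter_mem (Filter.inter_mem hA hB) hC
      obtain ⟨t, ht⟩ := Filter.nonempty_of_mem h1
      exact ⟨t, ht.1.1, ht.1.2, ht.2⟩
    have hchain : ∀ s : ℕ, J s = secL (J (s + 1)) (x s) := by
      intro s
      obtain ⟨t, h1, h2, h3⟩ := hpick3 _ _ _ (hJ s) (hJ (s + 1)) (hUtail (s + 1))
      have e1 : secLW L₀ (seg x s (mf t - s)) = J s := h1
      have e2 : secLW L₀ (seg x (s + 1) (mf t - (s + 1))) = J (s + 1) := h2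
      have hlt : s + 1 ≤ mf t := h3
      rw [← e1, ← e2]
      have harith : mf t - s = (mf t - (s + 1)) + 1 := by omega
      rw [harith, seg_succ, secLW_append_singleton]
    have hrel : ∀ s : ℕ, prodFun (J s) (wordOf x s) = wordOf y s := by
      intro s
      obtain ⟨t, h1, h2, -⟩ := hpick3 _ _ _ (hJ s) (hUtail s) (hUtail s)
      have e1 : secLW L₀ (seg x s (mf t - s)) = J s := h1
      rw [← e1]
      exact hact t s h2
    have hvalid : ∀ s, validL (J s) := by
      intro s
      obtain ⟨t, h1, -, -⟩ := hpick3 _ _ _ (hJ s) (hUtail s) (hUtail s)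
      have e1 : secLW L₀ (seg x s (mf t - s)) = J s := h1
      rw [← e1]
      exact validL_of_sublist (secLW_sublist _ _) hL₀v
    have hbound : ∀ s, (J s).length ≤ L₀.length := by
      intro s
      obtain ⟨t, h1, -, -⟩ := hpick3 _ _ _ (hJ s) (hUtail s) (hUtail s)
      have e1 : secLW L₀ (seg x s (mf t - s)) = J s := h1
      rw [← e1]
      exact (secLW_sublist _ _).length_le
    have hmono : Monotone fun s => (J s).length := by
      apply monotone_nat_of_le_succ
      intro s
      rw [hchain s]
      exact (secL_sublist _ _).length_le
    obtain ⟨S₀, hS₀⟩ := mono_stab _ hmono L₀.length hbound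
    set S := max S₀ (d + 1) with hSdef
    have hdS : d < S := lt_of_lt_of_le (Nat.lt_succ_self d) (le_max_right _ _)
    have hconst : ∀ s, S ≤ s → J s = J S := by
      intro s hs
      induction s, hs using Nat.le_induction with
      | base => rfl
      | succ s hs ih =>
        rw [← ih]
        have h2 : (J s).length = (J (s + 1)).length := by
          rw [hS₀ s (le_trans (le_max_left _ _) hs),
            hS₀ (s + 1) (le_trans (le_max_left _ _) (hs.trans (Nat.le_succ s)))]
        have hsub : List.Sublist (J s) (J (s + 1)) := by
          rw [hchain s]
          exact secL_sublist _ _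
        exact (hsub.eq_of_length h2).symm
    rcases hJS : J S with - | ⟨p, rest⟩
    · exfalso
      have h1 := hrel S
      rw [hJS, prodFun_nil] at h1
      exact hd ((wordOf_eq_iff x y S).mp h1 d hdS)
    · have hxtail : ∀ s, S ≤ s → ∀ q ∈ J S, q.1 = x s := by
        intro s hs
        have h1 : secL (J S) (x s) = J S := by
          conv_lhs => rw [← hconst (s + 1) (le_trans hs (Nat.le_succ s))]
          rw [← hchain s, hconst s hs]
        exact (allKept (J S) (hvalid S) (x s) (by rw [h1])).1
      have hxl : ∀ s, S ≤ s → x s = p.1 := by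
        intro s hs
        exact (hxtail s hs p (by rw [hJS]; exact List.mem_cons_self)).symm
      have hpegs : ∀ q ∈ J S, q.1 = p.1 := by
        intro q hq
        exact (hxtail S le_rfl q hq).trans (hxl S le_rfl)
      set σs := ((J S).map Prod.snd).prod with hσs
      have hσl : σs p.1 = p.1 := by
        apply listperm_fix
        intro σ hσmem
        obtain ⟨q, hq, rfl⟩ := List.mem_map.mp hσmem
        rw [← hpegs q hq]
        exact hvalid S q hq
      have hJfun : ∀ w, prodFun (J S) w = genFun p.1 σs w :=
        prodFun_eq_genFun p.1 (J S) (hvalid S) hpegs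
      have hytail : ∀ s, S ≤ s → y s = p.1 := by
        intro s hs
        have h1 := hrel (s + 1)
        rw [hconst (s + 1) (le_trans hs (Nat.le_succ s)), hJfun, wordOf_succ, wordOf_succ,
          genFun_cons, if_pos (hxl s hs)] at h1
        have h2 := (List.cons_eq_cons.mp h1).1
        rw [← h2]
        exact hxl s hs
      have hgen := genFun_wordOf_cases p.1 σs x y S (by rw [← hJfun]; exact hrel S)
      rcases hgen with h | ⟨q, hqS, hql, hqσ, hbet, hbelow⟩
      · exact absurd (h d hdS) hd
      · have hdq : d = q := by
          by_contra hne
          rcases lt_or_gt_of_ne hne with hlt | hgt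
          · exact hd (hbelow d hlt)
          · have h2 := hbet d hgt hdS
            exact hd (h2.1.trans h2.2.symm)
        have hxyq : x q ≠ y q := hdq ▸ hd
        refine ⟨x q, y q, p.1, hxyq, hql, ?_, q, hbelow, rfl, ?_⟩
        · intro hyq
          apply hql
          apply σs.injective
          rw [← hqσ, hyq, hσl]
        · intro s hs
          by_cases hsS : s < S
          · exact hbet s (by omega) hsS
          · exact ⟨hxl s (by omega), hytail s (by omega)⟩
  · rintro ⟨i, j, l, hij, hil, hjl, r, hlow, hset, hhigh⟩
    obtain ⟨a, hacoe, hamem⟩ := swapGen_mem hk hij hil hjl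
    have hxmem : x r = i ∨ x r = j := by
      have h1 : x r ∈ ({i, j} : Set (Fin k)) := by
        rw [← hset]
        exact Set.mem_insert _ _
      simpa using h1
    have himem : i = x r ∨ i = y r := by
      have h1 : i ∈ ({x r, y r} : Set (Fin k)) := by
        rw [hset]
        exact Set.mem_insert _ _
      simpa using h1
    have hjmem : j = x r ∨ j = y r := by
      have h1 : j ∈ ({x r, y r} : Set (Fin k)) := by
        rw [hset]
        exact Set.mem_insert_iff.mpr (Or.inr rfl)
      simpa using h1
    have hkey : (x r = i ∧ y r = j) ∨ (x r = j ∧ y r = i) := by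
      rcases hxmem with h | h
      · rcases hjmem with hj | hj
        · exact absurd (hj.trans h) hij.symm
        · exact Or.inl ⟨h, hj.symm⟩
      · rcases himem with hi | hi
        · exact absurd (hi.trans h) hij
        · exact Or.inr ⟨h, hi.symm⟩
    have hxrl : x r ≠ l := by
      rcases hkey with ⟨h, -⟩ | ⟨h, -⟩ <;> rw [h] <;> assumption
    have hswap : Equiv.swap i j (x r) = y r := by
      rcases hkey with ⟨h1, h2⟩ | ⟨h1, h2⟩
      · rw [h1, h2, Equiv.swap_apply_left]
      · rw [h1, h2, Equiv.swap_apply_right]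
    have main : ∀ m, r + 1 ≤ m → a (wordOf x m) = wordOf y m := by
      intro m hm
      induction m, hm using Nat.le_induction with
      | base =>
        rw [wordOf_succ, wordOf_succ, hacoe, genFun_cons, if_neg hxrl, hswap]
        congr 1
        rw [wordOf_eq_iff]
        exact fun s hs => hlow s hs
      | succ m hm ih =>
        rw [wordOf_succ, wordOf_succ, hacoe, genFun_cons, if_pos (hhigh m hm).1, ← hacoe, ih,
          (hhigh m hm).1, (hhigh m hm).2]
    refine ⟨fun m => if m ≤ r then 1 else a, ?_, ?_, ?_⟩
    · intro m
      show (if m ≤ r then (1 : Equiv.Perm (Word k)) else a) ∈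
        Subgroup.closure (hanoiSet k 1 ∪ {1})
      by_cases hm : m ≤ r
      · rw [if_pos hm]
        exact Subgroup.one_mem _
      · rw [if_neg hm]
        exact Subgroup.subset_closure (Or.inl hamem)
    · apply Set.Finite.subset (Set.toFinite {(1 : Equiv.Perm (Word k)), a})
      rintro - ⟨m, rfl⟩
      by_cases hm : m ≤ r <;> simp [hm]
    · intro m hm
      show (if m ≤ r then (1 : Equiv.Perm (Word k)) else a) (wordOf x m) = wordOf y m
      by_cases hmr : m ≤ r
      · rw [if_pos hmr]
        show wordOf x m = wordOf y m
        rw [wordOf_eq_iff]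
        exact fun s hs => hlow s (lt_of_lt_of_le hs hmr)
      · rw [if_neg hmr]
        exact main m (by omega)


end Hanoi
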